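/- arXiv:1710.01522 — 7 statements merged into one kernel-verified Lean document; each statement's English description precedes it below -/
import Mathlib

section
/- Let q ∈ ℂ \ {0,1} and let f₁, f₂, f₃, f be four pairwise distinct meromorphic functions each satisfying the q-difference Riccati equation g(qz) = (A(z) + g(z))/(1 - (q-1)z·g(z)). Then the cross ratio R(z) = [(f(z)-f₁(z))/(f(z)-f₂(z))] · [(f₃(z)-f₂(z))/(f₃(z)-f₁(z))] satisfies R(qz) = R(z). -/
private lemma stmt2_pair (t A x y x' y' : ℂ)
    (hx : x' * (1 - t * x) = A + x) (hy : y' * (1 - t * y) = A + y) :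
    (x' - y') * (1 - t * x) * (1 - t * y) = (x - y) * (1 + t * A) := by
  linear_combination (1 - t * y) * hx - (1 - t * x) * hy

private lemma stmt2_key (t E a b c d a' b' c' d' : ℂ) (ht : t ≠ 0)
    (kab : (a' - b') * (1 - t * a) * (1 - t * b) = (a - b) * E)
    (kac : (a' - c') * (1 - t * a) * (1 - t * c) = (a - c) * E)
    (kad : (a' - d') * (1 - t * a) * (1 - t * d) = (a - d) * E)
    (kbc : (b' - c') * (1 - t * b) * (1 - t * c) = (b - c) * E)
    (kbd : (b' - d') * (1 - t * b) * (1 - t * d) = (b - d) * E)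
    (kcd : (c' - d') * (1 - t * c) * (1 - t * d) = (c - d) * E)
    (hac : a - c ≠ 0) (hdb : d - b ≠ 0) (hac' : a' - c' ≠ 0) (hdb' : d' - b' ≠ 0) :
    (a' - b') * (d' - c') * ((a - c) * (d - b)) =
      (a - b) * (d - c) * ((a' - c') * (d' - b')) := by
  have eqv : ∀ x y : ℂ, 1 - t * x = 0 → 1 - t * y = 0 → x = y := by
    intro x y hx hy
    exact mul_left_cancel₀ ht (by linear_combination hy - hx)
  by_cases hD : (1 - t * a) * (1 - t * b) * ((1 - t * c) * (1 - t * d)) = 0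
  · -- degenerate case : E = 0
    have hE : E = 0 := by
      rcases mul_eq_zero.mp hD with h | h
      · rcases mul_eq_zero.mp h with h | h
        · have : (a - c) * E = 0 := by linear_combination -kac + (1 - t * c) * (a' - c') * h
          exact (mul_eq_zero.mp this).resolve_left hac
        · have : (b - d) * E = 0 := by linear_combination -kbd + (1 - t * d) * (b' - d') * h
          have hbd : b - d ≠ 0 := fun hh => hdb (by linear_combination -hh)
          exact (mul_eq_zero.mp this).resolve_left hbd
      · rcases mul_eq_zero.mp h with h | h
        · have : (a - c) * E = 0 := by linear_combination -kac + (1 - t * a) * (a' - c') * h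
          exact (mul_eq_zero.mp this).resolve_left hac
        · have : (b - d) * E = 0 := by linear_combination -kbd + (1 - t * b) * (b' - d') * h
          have hbd : b - d ≠ 0 := fun hh => hdb (by linear_combination -hh)
          exact (mul_eq_zero.mp this).resolve_left hbd
    have hDaDc : (1 - t * a) * (1 - t * c) = 0 := by
      have h5 : (a' - c') * ((1 - t * a) * (1 - t * c)) = 0 := by
        linear_combination kac + (a - c) * hE
      exact (mul_eq_zero.mp h5).resolve_left hac'
    have hDbDd : (1 - t * b) * (1 - t * d) = 0 := by
      have hbd' : b' - d' ≠ 0 := fun hh => hdb' (by linear_combination -hh)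
      have h5 : (b' - d') * ((1 - t * b) * (1 - t * d)) = 0 := by
        linear_combination kbd + (b - d) * hE
      exact (mul_eq_zero.mp h5).resolve_left hbd'
    rcases mul_eq_zero.mp hDaDc with hDa | hDc <;> rcases mul_eq_zero.mp hDbDd with hDb | hDd
    · -- Da = 0, Db = 0 : a = b, and c' = d'
      obtain rfl : a = b := eqv a b hDa hDb
      have hDc : 1 - t * c ≠ 0 := fun h => hac (sub_eq_zero.mpr (eqv a c hDa h))
      have hDd : 1 - t * d ≠ 0 := fun h => hdb (sub_eq_zero.mpr (eqv d a h hDa))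
      have h6 : (c' - d') * ((1 - t * c) * (1 - t * d)) = 0 := by
        linear_combination kcd + (c - d) * hE
      have hcd' : c' - d' = 0 := (mul_eq_zero.mp h6).resolve_right (mul_ne_zero hDc hDd)
      obtain rfl : c' = d' := sub_eq_zero.mp hcd'
      ring
    · -- Da = 0, Dd = 0 : a = d, and b' = c'
      obtain rfl : a = d := eqv a d hDa hDd
      have hDb : 1 - t * b ≠ 0 := fun h => hdb (sub_eq_zero.mpr (eqv a b hDa h))
      have hDc : 1 - t * c ≠ 0 := fun h => hac (sub_eq_zero.mpr (eqv a c hDa h))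
      have h6 : (b' - c') * ((1 - t * b) * (1 - t * c)) = 0 := by
        linear_combination kbc + (b - c) * hE
      have hbc' : b' - c' = 0 := (mul_eq_zero.mp h6).resolve_right (mul_ne_zero hDb hDc)
      obtain rfl : b' = c' := sub_eq_zero.mp hbc'
      ring
    · -- Dc = 0, Db = 0 : c = b, and a' = d'
      obtain rfl : c = b := eqv c b hDc hDb
      have hDa : 1 - t * a ≠ 0 := fun h => hac (sub_eq_zero.mpr (eqv a c h hDc))
      have hDd : 1 - t * d ≠ 0 := fun h => hdb (sub_eq_zero.mpr (eqv d c h hDc))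
      have h6 : (a' - d') * ((1 - t * a) * (1 - t * d)) = 0 := by
        linear_combination kad + (a - d) * hE
      have had' : a' - d' = 0 := (mul_eq_zero.mp h6).resolve_right (mul_ne_zero hDa hDd)
      obtain rfl : a' = d' := sub_eq_zero.mp had'
      ring
    · -- Dc = 0, Dd = 0 : c = d, and a' = b'
      obtain rfl : c = d := eqv c d hDc hDd
      have hDa : 1 - t * a ≠ 0 := fun h => hac (sub_eq_zero.mpr (eqv a c h hDc))
      have hDb' : 1 - t * b ≠ 0 := fun h => hdb (sub_eq_zero.mpr (eqv c b hDc h))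
      have h6 : (a' - b') * ((1 - t * a) * (1 - t * b)) = 0 := by
        linear_combination kab + (a - b) * hE
      have hab' : a' - b' = 0 := (mul_eq_zero.mp h6).resolve_right (mul_ne_zero hDa hDb')
      obtain rfl : a' = b' := sub_eq_zero.mp hab'
      ring
  · -- generic case : all factors nonzero
    push_neg at hD
    rw [mul_ne_zero_iff, mul_ne_zero_iff, mul_ne_zero_iff] at hD
    obtain ⟨⟨hDa, hDb⟩, hDc, hDd⟩ := hD
    apply mul_right_cancel₀
      (mul_ne_zero (mul_ne_zero (mul_ne_zero hDa hDb) hDc) hDd)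
    linear_combination
      ((d' - c') * (1 - t * c) * (1 - t * d) * (a - c) * (d - b)) * kab
      - ((a - b) * E * (a - c) * (d - b)) * kcd
      - ((d' - b') * (1 - t * b) * (1 - t * d) * (a - b) * (d - c)) * kac
      + ((a - c) * E * (a - b) * (d - c)) * kbd

theorem stmt_2 (q : ℂ) (hq0 : q ≠ 0) (hq1 : q ≠ 1) (A f₁ f₂ f₃ f : ℂ → ℂ)
    (hne : f₁ ≠ f₂ ∧ f₁ ≠ f₃ ∧ f₁ ≠ f ∧ f₂ ≠ f₃ ∧ f₂ ≠ f ∧ f₃ ≠ f)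
    (h1 : ∀ z, f₁ (q * z) * (1 - (q - 1) * z * f₁ z) = A z + f₁ z)
    (h2 : ∀ z, f₂ (q * z) * (1 - (q - 1) * z * f₂ z) = A z + f₂ z)
    (h3 : ∀ z, f₃ (q * z) * (1 - (q - 1) * z * f₃ z) = A z + f₃ z)
    (hf : ∀ z, f (q * z) * (1 - (q - 1) * z * f z) = A z + f z) :
    ∀ z, f z - f₂ z ≠ 0 → f₃ z - f₁ z ≠ 0 →
      f (q * z) - f₂ (q * z) ≠ 0 → f₃ (q * z) - f₁ (q * z) ≠ 0 →
      (f (q * z) - f₁ (q * z)) / (f (q * z) - f₂ (q * z)) *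
        ((f₃ (q * z) - f₂ (q * z)) / (f₃ (q * z) - f₁ (q * z))) =
      (f z - f₁ z) / (f z - f₂ z) * ((f₃ z - f₂ z) / (f₃ z - f₁ z)) := by
  intro z hac hdb hac' hdb'
  by_cases hz : z = 0
  · subst hz; rw [mul_zero]
  · have ht : (q - 1) * z ≠ 0 := mul_ne_zero (sub_ne_zero.mpr hq1) hz
    have kab := stmt2_pair ((q - 1) * z) (A z) (f z) (f₁ z) (f (q * z)) (f₁ (q * z))
      (hf z) (h1 z)
    have kac := stmt2_pair ((q - 1) * z) (A z) (f z) (f₂ z) (f (q * z)) (f₂ (q * z))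
      (hf z) (h2 z)
    have kad := stmt2_pair ((q - 1) * z) (A z) (f z) (f₃ z) (f (q * z)) (f₃ (q * z))
      (hf z) (h3 z)
    have kbc := stmt2_pair ((q - 1) * z) (A z) (f₁ z) (f₂ z) (f₁ (q * z)) (f₂ (q * z))
      (h1 z) (h2 z)
    have kbd := stmt2_pair ((q - 1) * z) (A z) (f₁ z) (f₃ z) (f₁ (q * z)) (f₃ (q * z))
      (h1 z) (h3 z)
    have kcd := stmt2_pair ((q - 1) * z) (A z) (f₂ z) (f₃ z) (f₂ (q * z)) (f₃ (q * z))
      (h2 z) (h3 z)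
    have P := stmt2_key ((q - 1) * z) (1 + (q - 1) * z * A z)
      (f z) (f₁ z) (f₂ z) (f₃ z)
      (f (q * z)) (f₁ (q * z)) (f₂ (q * z)) (f₃ (q * z))
      ht kab kac kad kbc kbd kcd hac hdb hac' hdb'
    rw [div_mul_div_comm, div_mul_div_comm,
      div_eq_div_iff (mul_ne_zero hac' hdb') (mul_ne_zero hac hdb)]
    linear_combination P
end

section
/- Let q ∈ ℂ \ {0} with |q| ≠ 1, let A be meromorphic with A(z) ≢ -1/((q-1)z), and suppose f₀, f₁, f₂ are three distinct meromorphic solutions of the q-difference Riccati equation f(qz) = (A(z)+f(z))/(1-(q-1)z·f(z)). Setting u_j(z) = 1/(f_j(z) - f₀(z)) for j = 1,2, the functions u₁ and u₂ are two distinct meromorphic solutions of the linear equation [1+(q-1)z·f₀(qz)]·u(qz) - [1-(q-1)z·f₀(z)]·u(z) + (q-1)z = 0, and u₀ = u₁ - u₂ is a nonzero solution of the homogeneous equation [1+(q-1)z·f₀(qz)]·u(qz) - [1-(q-1)z·f₀(z)]·u(z) = 0. -/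
theorem stmt_6 (q : ℂ) (hq0 : q ≠ 0) (hq1 : ‖q‖ ≠ 1) (A f₀ f₁ f₂ : ℂ → ℂ)
    (hA : ∃ z : ℂ, z ≠ 0 ∧ A z ≠ -(1 / ((q - 1) * z)))
    (hne : f₀ ≠ f₁ ∧ f₀ ≠ f₂ ∧ f₁ ≠ f₂)
    (h0 : ∀ z, f₀ (q * z) * (1 - (q - 1) * z * f₀ z) = A z + f₀ z)
    (h1 : ∀ z, f₁ (q * z) * (1 - (q - 1) * z * f₁ z) = A z + f₁ z)
    (h2 : ∀ z, f₂ (q * z) * (1 - (q - 1) * z * f₂ z) = A z + f₂ z) :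
    (fun z => (f₁ z - f₀ z)⁻¹) ≠ (fun z => (f₂ z - f₀ z)⁻¹) ∧
    (∀ z, f₁ z ≠ f₀ z → f₁ (q * z) ≠ f₀ (q * z) →
      (1 + (q - 1) * z * f₀ (q * z)) * (f₁ (q * z) - f₀ (q * z))⁻¹ -
        (1 - (q - 1) * z * f₀ z) * (f₁ z - f₀ z)⁻¹ + (q - 1) * z = 0) ∧
    (∀ z, f₂ z ≠ f₀ z → f₂ (q * z) ≠ f₀ (q * z) →
      (1 + (q - 1) * z * f₀ (q * z)) * (f₂ (q * z) - f₀ (q * z))⁻¹ -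
        (1 - (q - 1) * z * f₀ z) * (f₂ z - f₀ z)⁻¹ + (q - 1) * z = 0) ∧
    (fun z => (f₁ z - f₀ z)⁻¹ - (f₂ z - f₀ z)⁻¹) ≠ 0 ∧
    (∀ z, f₁ z ≠ f₀ z → f₁ (q * z) ≠ f₀ (q * z) →
        f₂ z ≠ f₀ z → f₂ (q * z) ≠ f₀ (q * z) →
      (1 + (q - 1) * z * f₀ (q * z)) *
          ((f₁ (q * z) - f₀ (q * z))⁻¹ - (f₂ (q * z) - f₀ (q * z))⁻¹) -
        (1 - (q - 1) * z * f₀ z) * ((f₁ z - f₀ z)⁻¹ - (f₂ z - f₀ z)⁻¹) = 0) := by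
  have key : ∀ f : ℂ → ℂ,
      (∀ z, f (q * z) * (1 - (q - 1) * z * f z) = A z + f z) →
      ∀ z, f z ≠ f₀ z → f (q * z) ≠ f₀ (q * z) →
      (1 + (q - 1) * z * f₀ (q * z)) * (f (q * z) - f₀ (q * z))⁻¹ -
        (1 - (q - 1) * z * f₀ z) * (f z - f₀ z)⁻¹ + (q - 1) * z = 0 := by
    intro f hf z hz hqz
    have hg : f z - f₀ z ≠ 0 := sub_ne_zero.mpr hz
    have hg' : f (q * z) - f₀ (q * z) ≠ 0 := sub_ne_zero.mpr hqz
    have e1 := hf z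
    have e0 := h0 z
    field_simp
    linear_combination e0 - e1
  have eq12 : ∀ z, (f₁ z - f₀ z)⁻¹ = (f₂ z - f₀ z)⁻¹ → f₁ z = f₂ z := by
    intro z h
    by_cases h1z : f₁ z = f₀ z
    · by_cases h2z : f₂ z = f₀ z
      · rw [h1z, h2z]
      · exfalso
        rw [h1z, sub_self, inv_zero] at h
        exact sub_ne_zero.mpr h2z (inv_eq_zero.mp h.symm)
    · by_cases h2z : f₂ z = f₀ z
      · exfalso
        rw [h2z, sub_self, inv_zero] at h
        exact sub_ne_zero.mpr h1z (inv_eq_zero.mp h)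
      · have := inv_injective h
        linear_combination this
  refine ⟨?_, key f₁ h1, key f₂ h2, ?_, ?_⟩
  · intro h
    apply hne.2.2
    funext z
    exact eq12 z (congrFun h z)
  · intro h
    apply hne.2.2
    funext z
    have := congrFun h z
    simp only [Pi.zero_apply, sub_eq_zero] at this
    exact eq12 z this
  · intro z hz1 hqz1 hz2 hqz2
    have k1 := key f₁ h1 z hz1 hqz1
    have k2 := key f₂ h2 z hz2 hqz2
    linear_combination k1 - k2
end

section
/- Let q ∈ ℂ \ {0} with |q| ≠ 1 and let A be a meromorphic function. Suppose f₀ is a meromorphic solution of the q-difference Riccati equation f(qz) = (A(z)+f(z))/(1-(q-1)z·f(z)), and u is a meromorphic solution of [1+(q-1)z·f₀(qz)]·u(qz) - [1-(q-1)z·f₀(z)]·u(z) + (q-1)z = 0 with u ≢ 0. Then f(z) = 1/u(z) + f₀(z) is a meromorphic solution of the same q-difference Riccati equation. -/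
theorem stmt_7 (q : ℂ) (hq0 : q ≠ 0) (hq1 : ‖q‖ ≠ 1) (A f₀ u : ℂ → ℂ)
    (h0 : ∀ z, f₀ (q * z) * (1 - (q - 1) * z * f₀ z) = A z + f₀ z)
    (hu0 : u ≠ 0)
    (hu : ∀ z, (1 + (q - 1) * z * f₀ (q * z)) * u (q * z) -
      (1 - (q - 1) * z * f₀ z) * u z + (q - 1) * z = 0) :
    ∀ z, u z ≠ 0 → u (q * z) ≠ 0 →
      ((u (q * z))⁻¹ + f₀ (q * z)) * (1 - (q - 1) * z * ((u z)⁻¹ + f₀ z)) =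
        A z + ((u z)⁻¹ + f₀ z) := by
  intro z h1 h2
  have e0 := h0 z
  have eu := hu z
  field_simp
  linear_combination u (q * z) * u z * e0 - eu
end

section
/- Let q ∈ ℂ \ {0} with |q| ≠ 1. Suppose f₀ = P/Q is a rational function with P, Q nonzero polynomials and deg P ≥ deg Q (so f₀ does not tend to 0 at infinity). Then the homogeneous q-difference equation [1+(q-1)z·f₀(qz)]·u(qz) - [1-(q-1)z·f₀(z)]·u(z) = 0 has no nonzero rational solution u. -/
open Polynomial

/-- For `f₀ = P/Q` with `deg P ≥ deg Q`, the homogeneous equation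
`[1+(q-1)z f₀(qz)]·u(qz) = [1-(q-1)z f₀(z)]·u(z)` has no nonzero rational
solution `u = U/V`; the equation is stated in cross-multiplied polynomial form. -/
theorem stmt_8 (q : ℂ) (hq0 : q ≠ 0) (hq1 : ‖q‖ ≠ 1) (P Q : Polynomial ℂ)
    (hP : P ≠ 0) (hQ : Q ≠ 0) (hdeg : Q.degree ≤ P.degree) :
    ∀ U V : Polynomial ℂ, V ≠ 0 →
      (Q.comp (C q * X) + C (q - 1) * X * P.comp (C q * X)) *
          U.comp (C q * X) * Q * V =
        (Q - C (q - 1) * X * P) * U * Q.comp (C q * X) * V.comp (C q * X) →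
      U = 0 := by
  intro U V hV heq
  by_contra hU
  have hqne1 : q ≠ 1 := by rintro rfl; simp at hq1
  have hq1' : q - 1 ≠ 0 := sub_ne_zero.mpr hqne1
  set n := P.natDegree with hn
  set m := Q.natDegree with hm
  set u := U.natDegree with hu
  set v := V.natDegree with hv
  have hmn : m ≤ n := natDegree_le_natDegree hdeg
  have hXq : (C q * X).natDegree = 1 := by
    rw [natDegree_C_mul hq0, natDegree_X]
  have hXqlc : (C q * X).leadingCoeff = q := by
    rw [leadingCoeff_mul, leadingCoeff_C, leadingCoeff_X, mul_one]
  have hXq0 : (C q * X).natDegree ≠ 0 := by rw [hXq]; norm_num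
  -- leading coefficients of compositions
  have hPl : P.leadingCoeff ≠ 0 := leadingCoeff_ne_zero.mpr hP
  have hQl : Q.leadingCoeff ≠ 0 := leadingCoeff_ne_zero.mpr hQ
  have hUl : U.leadingCoeff ≠ 0 := leadingCoeff_ne_zero.mpr hU
  have hVl : V.leadingCoeff ≠ 0 := leadingCoeff_ne_zero.mpr hV
  have lcP : (P.comp (C q * X)).leadingCoeff = P.leadingCoeff * q ^ n := by
    rw [leadingCoeff_comp hXq0, hXqlc]
  have lcQ : (Q.comp (C q * X)).leadingCoeff = Q.leadingCoeff * q ^ m := by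
    rw [leadingCoeff_comp hXq0, hXqlc]
  have lcU : (U.comp (C q * X)).leadingCoeff = U.leadingCoeff * q ^ u := by
    rw [leadingCoeff_comp hXq0, hXqlc]
  have lcV : (V.comp (C q * X)).leadingCoeff = V.leadingCoeff * q ^ v := by
    rw [leadingCoeff_comp hXq0, hXqlc]
  have hPc0 : P.comp (C q * X) ≠ 0 := by
    intro h
    rw [h] at lcP
    exact (mul_ne_zero hPl (pow_ne_zero _ hq0)) (by simpa using lcP.symm)
  have hQc0 : Q.comp (C q * X) ≠ 0 := by
    intro h
    rw [h] at lcQ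
    exact (mul_ne_zero hQl (pow_ne_zero _ hq0)) (by simpa using lcQ.symm)
  have hCX : (C (q - 1) * X : Polynomial ℂ) ≠ 0 := by
    intro h
    apply hq1'
    simpa using congrArg (fun p => Polynomial.coeff p 1) h
  have hCXdeg : (C (q - 1) * X : Polynomial ℂ).natDegree = 1 := by
    rw [natDegree_C_mul hq1', natDegree_X]
  have hCXlc : (C (q - 1) * X : Polynomial ℂ).leadingCoeff = q - 1 := by
    rw [leadingCoeff_mul, leadingCoeff_C, leadingCoeff_X, mul_one]
  -- the T term
  have hT0 : C (q - 1) * X * P.comp (C q * X) ≠ 0 := mul_ne_zero hCX hPc0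
  have hTdeg : (C (q - 1) * X * P.comp (C q * X)).natDegree = n + 1 := by
    rw [natDegree_mul hCX hPc0, hCXdeg, natDegree_comp, hXq, add_comm]
    ring
  have hTlc : (C (q - 1) * X * P.comp (C q * X)).leadingCoeff
      = (q - 1) * (P.leadingCoeff * q ^ n) := by
    rw [leadingCoeff_mul, hCXlc, lcP]
  have hQcdeg : (Q.comp (C q * X)).natDegree = m := by
    rw [natDegree_comp, hXq, mul_one]
  have hltA : (Q.comp (C q * X)).degree < (C (q - 1) * X * P.comp (C q * X)).degree := by
    rw [degree_eq_natDegree hQc0, degree_eq_natDegree hT0, hQcdeg, hTdeg]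
    exact_mod_cast Nat.lt_succ_of_le hmn
  have lcA : (Q.comp (C q * X) + C (q - 1) * X * P.comp (C q * X)).leadingCoeff
      = (q - 1) * (P.leadingCoeff * q ^ n) := by
    rw [leadingCoeff_add_of_degree_lt hltA, hTlc]
  -- the B term
  have hT0' : C (q - 1) * X * P ≠ 0 := mul_ne_zero hCX hP
  have hTdeg' : (C (q - 1) * X * P).natDegree = n + 1 := by
    rw [natDegree_mul hCX hP, hCXdeg, add_comm]
  have hltB : Q.degree < (C (q - 1) * X * P).degree := by
    apply lt_of_le_of_lt hdeg
    rw [degree_eq_natDegree hP, degree_eq_natDegree hT0', hTdeg']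
    exact_mod_cast Nat.lt_succ_self n
  have lcB : (Q - C (q - 1) * X * P).leadingCoeff = -((q - 1) * P.leadingCoeff) := by
    rw [sub_eq_add_neg, add_comm, leadingCoeff_add_of_degree_lt' (by simpa using hltB),
      leadingCoeff_neg, leadingCoeff_mul, hCXlc]
  -- take leading coefficients of the equation
  have hlc := congrArg Polynomial.leadingCoeff heq
  rw [leadingCoeff_mul, leadingCoeff_mul, leadingCoeff_mul, leadingCoeff_mul,
    leadingCoeff_mul, leadingCoeff_mul, lcA, lcB, lcU, lcQ, lcV] at hlc
  -- cancel the nonzero scalars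
  have hc : (q - 1) * P.leadingCoeff * U.leadingCoeff * Q.leadingCoeff * V.leadingCoeff ≠ 0 :=
    mul_ne_zero (mul_ne_zero (mul_ne_zero (mul_ne_zero hq1' hPl) hUl) hQl) hVl
  have key : q ^ (n + u) = -q ^ (m + v) := by
    apply mul_left_cancel₀ hc
    calc (q - 1) * P.leadingCoeff * U.leadingCoeff * Q.leadingCoeff * V.leadingCoeff
        * q ^ (n + u)
        = (q - 1) * (P.leadingCoeff * q ^ n) * (U.leadingCoeff * q ^ u) * Q.leadingCoeff
          * V.leadingCoeff := by rw [pow_add]; ring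
      _ = -((q - 1) * P.leadingCoeff) * U.leadingCoeff * (Q.leadingCoeff * q ^ m)
          * (V.leadingCoeff * q ^ v) := hlc
      _ = (q - 1) * P.leadingCoeff * U.leadingCoeff * Q.leadingCoeff * V.leadingCoeff
          * -q ^ (m + v) := by rw [pow_add]; ring
  -- norms force equality of exponents
  have hnorm : ‖q‖ ^ (n + u) = ‖q‖ ^ (m + v) := by
    have := congrArg norm key
    simpa [norm_pow] using this
  have hb : (0 : ℝ) < ‖q‖ := norm_pos_iff.mpr hq0
  have hexp : n + u = m + v := by
    have hlog := congrArg Real.log hnorm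
    rw [Real.log_pow, Real.log_pow] at hlog
    have hlb : Real.log ‖q‖ ≠ 0 := Real.log_ne_zero_of_pos_of_ne_one hb hq1
    exact_mod_cast mul_right_cancel₀ hlb hlog
  rw [hexp] at key
  have : (2 : ℂ) * q ^ (m + v) = 0 := by linear_combination key
  exact pow_ne_zero (m + v) hq0 (by linear_combination this / 2)
end

section
/- The q-difference equation (z² + 4z - 2)·u(z/2) + 2(z² + 2z + 1)·u(z) = 0 has no nonzero rational function solution u. -/
open Polynomial

/-- `(z²+4z-2)u(z/2) + 2(z²+2z+1)u(z) = 0` has no nonzero rational solution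
`u = P/Q`, stated in cross-multiplied polynomial form. -/
theorem stmt_11 :
    ∀ P Q : Polynomial ℂ, Q ≠ 0 →
      (X ^ 2 + 4 * X - 2) * P.comp (C (1 / 2 : ℂ) * X) * Q +
        2 * (X ^ 2 + 2 * X + 1) * P * Q.comp (C (1 / 2 : ℂ) * X) = 0 →
      P = 0 := by
  intro P Q hQ h
  by_contra hP
  have hhalf : (1/2 : ℂ) ≠ 0 := by norm_num
  have hdeg : (C (1/2:ℂ) * X).natDegree ≠ 0 := by
    rw [natDegree_C_mul_X _ hhalf]; norm_num
  have hA : (X ^ 2 + 4 * X - 2 : ℂ[X]).Monic := by monicity!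
  have hB : (X ^ 2 + 2 * X + 1 : ℂ[X]).Monic := by monicity!
  have h' : (X ^ 2 + 4 * X - 2) * P.comp (C (1/2:ℂ) * X) * Q =
      -(2 * (X ^ 2 + 2 * X + 1) * P * Q.comp (C (1/2:ℂ) * X)) := by
    linear_combination h
  have hlc := congrArg leadingCoeff h'
  simp only [leadingCoeff_neg, leadingCoeff_mul, leadingCoeff_comp hdeg,
    hA.leadingCoeff, hB.leadingCoeff, leadingCoeff_C, leadingCoeff_X,
    one_mul, mul_one, one_pow] at hlc
  have h2 : (2 : ℂ[X]).leadingCoeff = 2 := by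
    rw [← map_ofNat (C : ℂ →+* ℂ[X]) 2, leadingCoeff_C]
  rw [h2] at hlc
  have hPl : P.leadingCoeff ≠ 0 := leadingCoeff_ne_zero.2 hP
  have hQl : Q.leadingCoeff ≠ 0 := leadingCoeff_ne_zero.2 hQ
  set p := P.natDegree
  set q := Q.natDegree
  have key : (1/2:ℂ)^p + 2 * (1/2:ℂ)^q = 0 := by
    have h0 : ((1/2:ℂ)^p + 2 * (1/2:ℂ)^q) * (P.leadingCoeff * Q.leadingCoeff) = 0 := by
      linear_combination hlc
    rcases mul_eq_zero.1 h0 with h1 | h1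
    · exact h1
    · exact absurd h1 (mul_ne_zero hPl hQl)
  have key2 : ((2^q + 2^(p+1) : ℕ) : ℂ) = 0 := by
    push_cast
    have := mul_eq_zero_of_left key ((2:ℂ)^p * 2^q)
    field_simp at this ⊢
    have hq2 : (1/2:ℂ)^q*2^q = 1 := by rw [← mul_pow]; norm_num
    have hp2 : (1/2:ℂ)^p*2^p = 1 := by rw [← mul_pow]; norm_num
    linear_combination this + (-2*(2:ℂ)^p) * hq2 - (2:ℂ)^q * hp2
  have hn : (2^q + 2^(p+1) : ℕ) = 0 := by exact_mod_cast key2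
  exact absurd hn (by positivity)
end

section
/- The q-difference equation (z³ - 3z² - 8z - 4)·u(z/2) + (z³ + 3z² + 4z + 4)·u(z) = 0 has no nonzero rational function solution u. -/
open Polynomial

theorem stmt_13 :
    ∀ P Q : Polynomial ℂ, Q ≠ 0 →
      (X ^ 3 - 3 * X ^ 2 - 8 * X - 4) * P.comp (C (1 / 2 : ℂ) * X) * Q +
        (X ^ 3 + 3 * X ^ 2 + 4 * X + 4) * P * Q.comp (C (1 / 2 : ℂ) * X) = 0 →
      P = 0 := by
  intro P Q hQ h
  by_contra hP
  have hA : (X ^ 3 - 3 * X ^ 2 - 8 * X - 4 : ℂ[X]).Monic := by monicity!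
  have hB : (X ^ 3 + 3 * X ^ 2 + 4 * X + 4 : ℂ[X]).Monic := by monicity!
  set c : ℂ[X] := C (1 / 2 : ℂ) * X with hc
  have hhalf : (1 / 2 : ℂ) ≠ 0 := by norm_num
  have hcdeg : c.natDegree = 1 := natDegree_C_mul_X _ hhalf
  have hclc : c.leadingCoeff = (1 / 2 : ℂ) := by
    rw [leadingCoeff, hcdeg]
    simp [hc]
  have hPc : (P.comp c).leadingCoeff = P.leadingCoeff * (1 / 2 : ℂ) ^ P.natDegree := by
    rw [leadingCoeff_comp (by omega : c.natDegree ≠ 0), hclc]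
  have hQc : (Q.comp c).leadingCoeff = Q.leadingCoeff * (1 / 2 : ℂ) ^ Q.natDegree := by
    rw [leadingCoeff_comp (by omega : c.natDegree ≠ 0), hclc]
  have h' : (X ^ 3 - 3 * X ^ 2 - 8 * X - 4) * P.comp c * Q =
      -((X ^ 3 + 3 * X ^ 2 + 4 * X + 4) * P * Q.comp c) := by
    linear_combination h
  have hlc := congrArg leadingCoeff h'
  rw [leadingCoeff_neg, leadingCoeff_mul, leadingCoeff_mul, leadingCoeff_mul,
    leadingCoeff_mul, hA.leadingCoeff, hB.leadingCoeff, hPc, hQc] at hlc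
  have hPl : P.leadingCoeff ≠ 0 := leadingCoeff_ne_zero.mpr hP
  have hQl : Q.leadingCoeff ≠ 0 := leadingCoeff_ne_zero.mpr hQ
  have key : (2 : ℂ) ^ Q.natDegree = -((2 : ℂ) ^ P.natDegree) := by
    field_simp at hlc
    have e1 : (1 / 2 : ℂ) ^ P.natDegree * 2 ^ P.natDegree = 1 := by rw [← mul_pow]; norm_num
    have e2 : (1 / 2 : ℂ) ^ Q.natDegree * 2 ^ Q.natDegree = 1 := by rw [← mul_pow]; norm_num
    linear_combination ((2 : ℂ) ^ P.natDegree * 2 ^ Q.natDegree) * hlc - (2 : ℂ) ^ Q.natDegree * e1 - (2 : ℂ) ^ P.natDegree * e2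
  have : ((2 : ℝ) ^ Q.natDegree + (2 : ℝ) ^ P.natDegree : ℂ) = 0 := by
    push_cast
    linear_combination key
  rw [← Complex.ofReal_pow, ← Complex.ofReal_pow, ← Complex.ofReal_add,
    Complex.ofReal_eq_zero] at this
  have h1 : (0:ℝ) < (2 : ℝ) ^ Q.natDegree + (2 : ℝ) ^ P.natDegree := by positivity
  linarith
end

section
/- Let q ∈ ℂ \ {0,1}, let A be meromorphic, and suppose f₁, f₂ are two distinct meromorphic solutions of the q-difference Riccati equation f(qz) = (A(z)+f(z))/(1-(q-1)z·f(z)). If f is any meromorphic solution of the Riccati equation distinct from f₁ and f₂, and h is defined by the Möbius relation f(z) = (f₁(z)·h(z) + f₂(z))/(h(z) + 1), then h satisfies the first order linear q-difference equation h(qz) = [(1-(q-1)z·f₁(z))/(1-(q-1)z·f₂(z))]·h(z). -/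
theorem stmt_14 (q : ℂ) (hq0 : q ≠ 0) (hq1 : q ≠ 1) (A f₁ f₂ f : ℂ → ℂ)
    (hne : f₁ ≠ f₂) (hf1 : f ≠ f₁) (hf2 : f ≠ f₂)
    (h1 : ∀ z, f₁ (q * z) * (1 - (q - 1) * z * f₁ z) = A z + f₁ z)
    (h2 : ∀ z, f₂ (q * z) * (1 - (q - 1) * z * f₂ z) = A z + f₂ z)
    (hf : ∀ z, f (q * z) * (1 - (q - 1) * z * f z) = A z + f z)
    (h : ℂ → ℂ) (hdef : ∀ z, h z = (f₂ z - f z) / (f z - f₁ z)) :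
    ∀ z, f z - f₁ z ≠ 0 → f (q * z) - f₁ (q * z) ≠ 0 →
      1 - (q - 1) * z * f₂ z ≠ 0 →
      h (q * z) = (1 - (q - 1) * z * f₁ z) / (1 - (q - 1) * z * f₂ z) * h z := by
  intro z hza hzb hzc
  have key : (f₂ (q*z) - f (q*z)) * ((1 - (q-1)*z*f₂ z) * (f z - f₁ z)) =
      (1 - (q-1)*z*f₁ z) * (f₂ z - f z) * (f (q*z) - f₁ (q*z)) := by
    linear_combination
      ((q-1)*z*(f (q*z))*(f₂ z - f₁ z) - (f₂ (q*z) - f (q*z))*(1 - (q-1)*z*f₂ z)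
        - (1 - (q-1)*z*f₁ z)*(f (q*z) - f₁ (q*z))) * hf z
      + ((q-1)*z*(f (q*z))*(f z - f₂ z) + (f₂ (q*z) - f (q*z))*(1 - (q-1)*z*f₂ z)) * h1 z
      + ((q-1)*z*(f (q*z))*(f₁ z - f z) + (1 - (q-1)*z*f₁ z)*(f (q*z) - f₁ (q*z))) * h2 z
  rw [hdef, hdef]
  rw [div_mul_div_comm, div_eq_div_iff hzb (mul_ne_zero hzc hza)]
  linear_combination key
end
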